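/- Let B ∈ ℝ^{N×N} be a positive diagonal matrix and let Q ∈ ℝ^{N×N} be such that B^{1/2} Q B^{1/2} is symmetric negative semidefinite, where M = B Q. Then for any finite sequence of times τ_0, ..., τ_ℓ ≥ 0, the product of matrix exponentials satisfies ‖∏_{k=0}^{ℓ} exp(τ_k M)‖₂ ≤ √(κ(B)), where κ(B) = ‖B‖₂ ‖B⁻¹‖₂ is the spectral condition number of B. -/

import Mathlib

open Matrix Finset

/-- Spectral (operator 2-) norm of a real square matrix. -/
noncomputable def specNorm {N : ℕ} (A : Matrix (Fin N) (Fin N) ℝ) : ℝ :=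
  ‖Matrix.toEuclideanCLM (𝕜 := ℝ) A‖

namespace ExpProdAux

variable {N : ℕ}

lemma specNorm_nonneg (A : Matrix (Fin N) (Fin N) ℝ) : 0 ≤ specNorm A :=
  norm_nonneg _

lemma specNorm_mul_le (A B : Matrix (Fin N) (Fin N) ℝ) :
    specNorm (A * B) ≤ specNorm A * specNorm B := by
  unfold specNorm
  rw [_root_.map_mul]
  exact norm_mul_le _ _

lemma specNorm_one_le : specNorm (1 : Matrix (Fin N) (Fin N) ℝ) ≤ 1 := by
  unfold specNorm
  rw [_root_.map_one, ContinuousLinearMap.one_def]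
  exact ContinuousLinearMap.norm_id_le

set_option maxHeartbeats 1000000 in
lemma specNorm_star_mul_self (A : Matrix (Fin N) (Fin N) ℝ) :
    specNorm (star A * A) = specNorm A * specNorm A := by
  unfold specNorm
  rw [_root_.map_mul, map_star]
  exact CStarRing.norm_star_mul_self (x := Matrix.toEuclideanCLM (𝕜 := ℝ) A)

lemma specNorm_diagonal_le {v : Fin N → ℝ} {c : ℝ} (hc : 0 ≤ c) (h : ∀ i, |v i| ≤ c) :
    specNorm (Matrix.diagonal v) ≤ c := by
  unfold specNorm
  apply ContinuousLinearMap.opNorm_le_bound _ hc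
  intro x
  have key : ∀ i, (Matrix.toEuclideanCLM (𝕜 := ℝ) (Matrix.diagonal v)) x i = v i * x i := by
    intro i
    have h2 := congrFun (Matrix.ofLp_toEuclideanCLM (Matrix.diagonal v) x) i
    simpa [Matrix.toLin'_apply, Matrix.mulVec_diagonal] using h2
  have hb : ∀ i, ‖(Matrix.toEuclideanCLM (𝕜 := ℝ) (Matrix.diagonal v)) x i‖ ^ 2
      ≤ c ^ 2 * ‖x i‖ ^ 2 := by
    intro i
    rw [key i]
    have h1 : |v i| ^ 2 ≤ c ^ 2 := by
      have := h i
      nlinarith [abs_nonneg (v i)]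
    have : ‖v i * x i‖ ^ 2 = |v i| ^ 2 * ‖x i‖ ^ 2 := by
      rw [Real.norm_eq_abs, Real.norm_eq_abs, abs_mul, mul_pow]
    rw [this]
    exact mul_le_mul_of_nonneg_right h1 (by positivity)
  calc ‖(Matrix.toEuclideanCLM (𝕜 := ℝ) (Matrix.diagonal v)) x‖
      = Real.sqrt (∑ i, ‖(Matrix.toEuclideanCLM (𝕜 := ℝ) (Matrix.diagonal v)) x i‖ ^ 2) :=
        EuclideanSpace.norm_eq _
    _ ≤ Real.sqrt (∑ i, c ^ 2 * ‖x i‖ ^ 2) :=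
        Real.sqrt_le_sqrt (Finset.sum_le_sum fun i _ => hb i)
    _ = c * Real.sqrt (∑ i, ‖x i‖ ^ 2) := by
        rw [← Finset.mul_sum, Real.sqrt_mul (sq_nonneg c), Real.sqrt_sq hc]
    _ = c * ‖x‖ := by rw [EuclideanSpace.norm_eq]

lemma specNorm_unitary_le {U : Matrix (Fin N) (Fin N) ℝ}
    (hU : star U * U = 1) : specNorm U ≤ 1 := by
  have h1 : specNorm U * specNorm U ≤ 1 := by
    rw [← specNorm_star_mul_self, hU]
    exact specNorm_one_le
  nlinarith [specNorm_nonneg U]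

lemma posSemidef_smul {A : Matrix (Fin N) (Fin N) ℝ} (hA : A.PosSemidef) {t : ℝ}
    (ht : 0 ≤ t) : (t • A).PosSemidef := by
  constructor
  · show (t • A)ᴴ = t • A
    rw [Matrix.conjTranspose_smul, hA.1.eq, star_trivial]
  · intro x
    exact (hA.smul ht).2 x

lemma specNorm_exp_le_one {S : Matrix (Fin N) (Fin N) ℝ} (hS : (-S).PosSemidef) :
    specNorm (NormedSpace.exp S) ≤ 1 := by
  have hH : S.IsHermitian := by simpa using hS.1.neg
  set U : Matrix (Fin N) (Fin N) ℝ := (hH.eigenvectorUnitary : Matrix (Fin N) (Fin N) ℝ)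
    with hUdef
  have hUmem : U ∈ Matrix.unitaryGroup (Fin N) ℝ := hH.eigenvectorUnitary.2
  have hU1 : U * star U = 1 := (Matrix.mem_unitaryGroup_iff).mp hUmem
  have hU2 : star U * U = 1 := (Matrix.mem_unitaryGroup_iff').mp hUmem
  have hspec : S = U * Matrix.diagonal hH.eigenvalues * star U := by
    have := hH.spectral_theorem
    simpa [RCLike.ofReal_real_eq_id] using this
  have heig : ∀ i, hH.eigenvalues i ≤ 0 := by
    intro i
    have h1 := hH.eigenvalues_eq i
    have h2 := hS.dotProduct_mulVec_nonneg (⇑(hH.eigenvectorBasis i))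
    rw [Matrix.neg_mulVec, dotProduct_neg] at h2
    simp only [RCLike.re_to_real] at h1
    linarith [h1 ▸ (neg_nonneg.mp (by linarith : 0 ≤ -(dotProduct
      (star ⇑(hH.eigenvectorBasis i)) (S *ᵥ ⇑(hH.eigenvectorBasis i)))))]
  have hexp : NormedSpace.exp S
      = U * Matrix.diagonal (fun i => Real.exp (hH.eigenvalues i)) * star U := by
    have e1 : NormedSpace.exp S
        = U * NormedSpace.exp (Matrix.diagonal hH.eigenvalues) * star U := by
      conv_lhs => rw [hspec]
      exact Matrix.exp_units_conj ⟨U, star U, hU1, hU2⟩ _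
    rw [e1, Matrix.exp_diagonal]
    have e2 : NormedSpace.exp hH.eigenvalues = fun i => Real.exp (hH.eigenvalues i) := by
      rw [Pi.exp_def]
      funext i
      rw [← Real.exp_eq_exp_ℝ]
    rw [e2]
  rw [hexp]
  have d1 : specNorm (Matrix.diagonal fun i => Real.exp (hH.eigenvalues i)) ≤ 1 := by
    apply specNorm_diagonal_le zero_le_one
    intro i
    rw [abs_of_pos (Real.exp_pos _)]
    exact Real.exp_le_one_iff.mpr (heig i)
  have hU2' : star (star U) * star U = 1 := by rw [star_star]; exact hU1
  calc specNorm (U * Matrix.diagonal (fun i => Real.exp (hH.eigenvalues i)) * star U)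
      ≤ specNorm (U * Matrix.diagonal fun i => Real.exp (hH.eigenvalues i))
          * specNorm (star U) := specNorm_mul_le _ _
    _ ≤ (specNorm U * specNorm (Matrix.diagonal fun i => Real.exp (hH.eigenvalues i)))
          * specNorm (star U) := by
        apply mul_le_mul_of_nonneg_right (specNorm_mul_le _ _) (specNorm_nonneg _)
    _ ≤ (1 * 1) * 1 := by
        apply mul_le_mul _ (specNorm_unitary_le hU2') (specNorm_nonneg _) (by norm_num)
        exact mul_le_mul (specNorm_unitary_le hU2) d1 (specNorm_nonneg _) (by
          linarith [specNorm_unitary_le hU2, specNorm_nonneg U])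
    _ = 1 := by norm_num

lemma specNorm_list_prod_le_one : ∀ (l : List (Matrix (Fin N) (Fin N) ℝ)),
    (∀ A ∈ l, specNorm A ≤ 1) → specNorm l.prod ≤ 1 := by
  intro l
  induction l with
  | nil => intro _; simpa using specNorm_one_le
  | cons a l ih =>
    intro h
    rw [List.prod_cons]
    calc specNorm (a * l.prod) ≤ specNorm a * specNorm l.prod := specNorm_mul_le _ _
      _ ≤ 1 * 1 := mul_le_mul (h a (List.mem_cons_self))
          (ih fun A hA => h A (List.mem_cons_of_mem a hA)) (specNorm_nonneg _) zero_le_one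
      _ = 1 := one_mul 1

lemma conj_list_prod (R Rinv : Matrix (Fin N) (Fin N) ℝ) (h1 : R * Rinv = 1)
    (h2 : Rinv * R = 1) : ∀ (l : List (Matrix (Fin N) (Fin N) ℝ)),
    (l.map fun A => R * A * Rinv).prod = R * l.prod * Rinv := by
  intro l
  induction l with
  | nil => simp [h1]
  | cons a l ih =>
    rw [List.map_cons, List.prod_cons, List.prod_cons, ih]
    simp only [mul_assoc]
    congr 2
    rw [← mul_assoc Rinv R, h2, one_mul]

end ExpProdAux

open ExpProdAux
theorem exp_product_norm_le_sqrt_cond (N : ℕ) (b : Fin N → ℝ) (hb : ∀ i, 0 < b i)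
    (Q : Matrix (Fin N) (Fin N) ℝ)
    (hQ : (-(Matrix.diagonal (fun i => Real.sqrt (b i)) * Q *
        Matrix.diagonal (fun i => Real.sqrt (b i)))).PosSemidef)
    (ℓ : ℕ) (τ : Fin (ℓ + 1) → ℝ) (hτ : ∀ k, 0 ≤ τ k) :
    specNorm ((List.ofFn fun k : Fin (ℓ + 1) =>
        NormedSpace.exp (τ k • (Matrix.diagonal b * Q))).prod) ≤
      Real.sqrt (specNorm (Matrix.diagonal b) * specNorm (Matrix.diagonal b)⁻¹) := by
  classical
  set R : Matrix (Fin N) (Fin N) ℝ := Matrix.diagonal (fun i => Real.sqrt (b i)) with hRdef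
  set Rinv : Matrix (Fin N) (Fin N) ℝ := Matrix.diagonal (fun i => (Real.sqrt (b i))⁻¹)
    with hRinvdef
  have hsne : ∀ i, Real.sqrt (b i) ≠ 0 := fun i => ne_of_gt (Real.sqrt_pos.mpr (hb i))
  have hRR : R * Rinv = 1 := by
    rw [hRdef, hRinvdef, Matrix.diagonal_mul_diagonal, ← Matrix.diagonal_one]
    exact congrArg Matrix.diagonal (funext fun i => mul_inv_cancel₀ (hsne i))
  have hRR' : Rinv * R = 1 := by
    rw [hRdef, hRinvdef, Matrix.diagonal_mul_diagonal, ← Matrix.diagonal_one]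
    exact congrArg Matrix.diagonal (funext fun i => inv_mul_cancel₀ (hsne i))
  have hB : R * R = Matrix.diagonal b := by
    rw [hRdef, Matrix.diagonal_mul_diagonal]
    exact congrArg Matrix.diagonal (funext fun i => Real.mul_self_sqrt (hb i).le)
  set S : Matrix (Fin N) (Fin N) ℝ := R * Q * R with hSdef
  -- rewrite each exponential
  have hexpk : ∀ k, NormedSpace.exp (τ k • (Matrix.diagonal b * Q))
      = R * NormedSpace.exp (τ k • S) * Rinv := by
    intro k
    have hM : τ k • (Matrix.diagonal b * Q) = R * (τ k • S) * Rinv := by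
      rw [Matrix.mul_smul, Matrix.smul_mul]
      congr 1
      rw [← hB, hSdef]
      have : R * (R * Q * R) * Rinv = R * R * Q * (R * Rinv) := by
        simp only [mul_assoc]
      rw [this, hRR, mul_one]
    rw [hM]
    exact Matrix.exp_units_conj ⟨R, Rinv, hRR, hRR'⟩ _
  have hlist : (List.ofFn fun k : Fin (ℓ + 1) =>
      NormedSpace.exp (τ k • (Matrix.diagonal b * Q)))
      = ((List.ofFn fun k : Fin (ℓ + 1) => NormedSpace.exp (τ k • S)).map
          fun A => R * A * Rinv) := by
    rw [List.map_ofFn]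
    congr 1
    funext k
    exact hexpk k
  rw [hlist, conj_list_prod R Rinv hRR hRR']
  -- bound on the inner product of exponentials
  have hP : specNorm ((List.ofFn fun k : Fin (ℓ + 1) =>
      NormedSpace.exp (τ k • S)).prod) ≤ 1 := by
    apply specNorm_list_prod_le_one
    intro A hA
    obtain ⟨k, hk⟩ := List.mem_ofFn.mp hA
    rw [← hk]
    apply specNorm_exp_le_one
    have : -(τ k • S) = τ k • (-S) := by rw [smul_neg]
    rw [this]
    exact posSemidef_smul hQ (hτ k)
  -- identify the right-hand side
  have hstarR : star R = R := by
    rw [hRdef, Matrix.star_eq_conjTranspose, Matrix.diagonal_conjTranspose]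
    exact congrArg Matrix.diagonal (funext fun i => star_trivial _)
  have hstarRinv : star Rinv = Rinv := by
    rw [hRinvdef, Matrix.star_eq_conjTranspose, Matrix.diagonal_conjTranspose]
    exact congrArg Matrix.diagonal (funext fun i => star_trivial _)
  have h1 : specNorm (Matrix.diagonal b) = specNorm R * specNorm R := by
    rw [← hB]
    nth_rewrite 1 [← hstarR]
    exact specNorm_star_mul_self R
  have hBinv : (Matrix.diagonal b)⁻¹ = Rinv * Rinv := by
    apply Matrix.inv_eq_right_inv
    rw [hRinvdef, Matrix.diagonal_mul_diagonal, Matrix.diagonal_mul_diagonal,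
      ← Matrix.diagonal_one]
    exact congrArg Matrix.diagonal (funext fun i => by
      rw [← mul_inv, Real.mul_self_sqrt (hb i).le]
      exact mul_inv_cancel₀ (ne_of_gt (hb i)))
  have h2 : specNorm (Matrix.diagonal b)⁻¹ = specNorm Rinv * specNorm Rinv := by
    rw [hBinv]
    nth_rewrite 1 [← hstarRinv]
    exact specNorm_star_mul_self Rinv
  have hRHS : Real.sqrt (specNorm (Matrix.diagonal b) * specNorm (Matrix.diagonal b)⁻¹)
      = specNorm R * specNorm Rinv := by
    rw [h1, h2, show specNorm R * specNorm R * (specNorm Rinv * specNorm Rinv)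
      = (specNorm R * specNorm Rinv) ^ 2 by ring]
    exact Real.sqrt_sq (mul_nonneg (specNorm_nonneg R) (specNorm_nonneg Rinv))
  rw [hRHS]
  calc specNorm (R * (List.ofFn fun k : Fin (ℓ + 1) =>
        NormedSpace.exp (τ k • S)).prod * Rinv)
      ≤ specNorm (R * (List.ofFn fun k : Fin (ℓ + 1) =>
          NormedSpace.exp (τ k • S)).prod) * specNorm Rinv := specNorm_mul_le _ _
    _ ≤ (specNorm R * specNorm ((List.ofFn fun k : Fin (ℓ + 1) =>
          NormedSpace.exp (τ k • S)).prod)) * specNorm Rinv :=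
        mul_le_mul_of_nonneg_right (specNorm_mul_le _ _) (specNorm_nonneg _)
    _ ≤ (specNorm R * 1) * specNorm Rinv := by
        apply mul_le_mul_of_nonneg_right _ (specNorm_nonneg _)
        exact mul_le_mul_of_nonneg_left hP (specNorm_nonneg _)
    _ = specNorm R * specNorm Rinv := by rw [mul_one]
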